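/- Let Γ be a group generated by a finite set S = S⁻¹ and let q : Γ → ℝ be a homogeneous quasi-homomorphism. Then there exists a constant C > 0 such that |q(g)| ≤ C·τ_{S̄}(g) for every g ∈ Γ, where τ_{S̄}(g) = lim_{n→∞} |gⁿ|_{S̄}/n. Consequently, if q(g) ≠ 0 then g is undistorted with respect to the bi-invariant word metric, i.e., τ_{S̄}(g) > 0. -/

import Mathlib

/-- The set of all conjugates of elements of `S`. -/
def conjSet {G : Type*} [Group G] (S : Set G) : Set G :=
  {x | ∃ g : G, ∃ s ∈ S, x = g * s * g⁻¹}

/-- The word norm of `g` with respect to a generating set `T`: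
the least length of a word in elements of `T` expressing `g`. -/
noncomputable def wordNorm {G : Type*} [Group G] (T : Set G) (g : G) : ℕ :=
  sInf {k | ∃ l : List G, (∀ x ∈ l, x ∈ T) ∧ l.prod = g ∧ l.length = k}

section Aux

variable {Γ : Type*} [Group Γ] (q : Γ → ℝ) (D : ℝ)

lemma aux_q_one (hhom : ∀ g : Γ, ∀ n : ℤ, q (g ^ n) = n * q g) : q 1 = 0 := by
  have := hhom 1 0
  simpa using this

lemma aux_q_conj (hq : ∀ g h : Γ, |q g - q (g * h) + q h| ≤ D)
    (hhom : ∀ g : Γ, ∀ n : ℤ, q (g ^ n) = n * q g) (g s : Γ) :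
    q (g * s * g⁻¹) = q s := by
  have qinv : q g⁻¹ = -q g := by
    have := hhom g (-1); simpa using this
  have key : ∀ n : ℕ, |(n : ℝ) * (q (g * s * g⁻¹) - q s)| ≤ 2 * D := by
    intro n
    have e1 : q ((g * s * g⁻¹) ^ n) = (n : ℝ) * q (g * s * g⁻¹) := by
      have := hhom (g * s * g⁻¹) (n : ℤ)
      rw [zpow_natCast] at this
      simpa using this
    have e2 : q ((g * s * g⁻¹) ^ n) = q (g * s ^ n * g⁻¹) := by rw [conj_pow]
    have e3 : q (s ^ n) = (n : ℝ) * q s := by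
      have := hhom s (n : ℤ)
      rw [zpow_natCast] at this
      simpa using this
    have h1 := hq g (s ^ n)
    have h2 := hq (g * s ^ n) g⁻¹
    rw [abs_le] at h1 h2
    rw [abs_le]
    constructor <;> nlinarith [h1.1, h1.2, h2.1, h2.2, e1, e2, e3, qinv]
  by_contra hne
  have hne' : q (g * s * g⁻¹) - q s ≠ 0 := fun h => hne (by linarith [sub_eq_zero.mp h])
  have hpos : 0 < |q (g * s * g⁻¹) - q s| := abs_pos.mpr hne'
  obtain ⟨n, hn⟩ := exists_nat_gt ((2 * D) / |q (g * s * g⁻¹) - q s|)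
  have := key n
  rw [abs_mul, Nat.abs_cast] at this
  have : (n : ℝ) ≤ (2 * D) / |q (g * s * g⁻¹) - q s| := by
    rw [le_div_iff₀ hpos]; linarith
  linarith

lemma aux_list_bound (hD : 0 ≤ D) (hq : ∀ g h : Γ, |q g - q (g * h) + q h| ≤ D)
    (hhom : ∀ g : Γ, ∀ n : ℤ, q (g ^ n) = n * q g)
    (M : ℝ) (hM : 0 ≤ M) :
    ∀ l : List Γ, (∀ x ∈ l, |q x| ≤ M) → |q l.prod| ≤ l.length * (M + D) := by
  intro l
  induction l with
  | nil => intro _; simp [aux_q_one q hhom]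
  | cons a t ih =>
    intro hmem
    have ha : |q a| ≤ M := hmem a List.mem_cons_self
    have ht : |q t.prod| ≤ t.length * (M + D) :=
      ih (fun x hx => hmem x (List.mem_cons_of_mem a hx))
    have h1 := hq a t.prod
    rw [abs_le] at h1 ha ht ⊢
    simp only [List.prod_cons, List.length_cons]
    push_cast
    constructor <;> nlinarith [h1.1, h1.2, ha.1, ha.2, ht.1, ht.2]

end Aux

/-- A homogeneous quasi-homomorphism on a group generated by a finite symmetric
set S is bounded by a multiple of the translation length of the bi-invariant
word norm; consequently, every g with q(g) ≠ 0 is undistorted. -/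
theorem homogeneous_quasimorphism_le_translation_length {Γ : Type*} [Group Γ]
    (S : Set Γ) (hfin : S.Finite) (hinv : S⁻¹ = S)
    (hgen : Subgroup.closure S = ⊤)
    (q : Γ → ℝ) (D : ℝ) (hD : 0 ≤ D)
    (hq : ∀ g h : Γ, |q g - q (g * h) + q h| ≤ D)
    (hhom : ∀ g : Γ, ∀ n : ℤ, q (g ^ n) = n * q g) :
    ∃ C : ℝ, 0 < C ∧ ∀ g : Γ, ∀ τg : ℝ,
      Filter.Tendsto (fun n : ℕ => (wordNorm (conjSet S) (g ^ n) : ℝ) / n)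
        Filter.atTop (nhds τg) →
      (|q g| ≤ C * τg ∧ (q g ≠ 0 → 0 < τg)) := by
  -- bound on S
  obtain ⟨M0, hM0⟩ : BddAbove ((fun s => |q s|) '' S) := (hfin.image _).bddAbove
  set M : ℝ := max M0 0 with hMdef
  have hM : 0 ≤ M := le_max_right _ _
  have hMS : ∀ s ∈ S, |q s| ≤ M := fun s hs =>
    le_max_of_le_left (hM0 ⟨s, hs, rfl⟩)
  have hMconj : ∀ x ∈ conjSet S, |q x| ≤ M := by
    rintro x ⟨g, s, hs, rfl⟩
    rw [aux_q_conj q D hq hhom]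
    exact hMS s hs
  -- every element is a product of elements of conjSet S
  have hnonempty : ∀ x : Γ, ∃ k, ∃ l : List Γ,
      (∀ y ∈ l, y ∈ conjSet S) ∧ l.prod = x ∧ l.length = k := by
    intro x
    have hx : x ∈ Submonoid.closure S := by
      have : x ∈ (Subgroup.closure S).toSubmonoid := by rw [hgen]; trivial
      rwa [Subgroup.closure_toSubmonoid, Set.union_comm, hinv, Set.union_self] at this
    obtain ⟨l, hl, hprod⟩ := Submonoid.exists_list_of_mem_closure hx
    exact ⟨l.length, l, fun y hy => ⟨1, y, hl y hy, by group⟩, hprod, rfl⟩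
  -- the main bound
  have hbound : ∀ x : Γ, |q x| ≤ (wordNorm (conjSet S) x) * (M + D) := by
    intro x
    have hne : {k | ∃ l : List Γ, (∀ y ∈ l, y ∈ conjSet S) ∧ l.prod = x ∧ l.length = k}.Nonempty :=
      hnonempty x
    obtain ⟨l, hl, hprod, hlen⟩ := Nat.sInf_mem hne
    have h := aux_list_bound q D hD hq hhom M hM l (fun y hy => hMconj y (hl y hy))
    rw [hprod, hlen] at h
    exact h
  refine ⟨M + D + 1, by linarith, fun g τg htend => ?_⟩
  -- τg ≥ 0
  have hτ0 : 0 ≤ τg := by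
    refine ge_of_tendsto htend ?_
    filter_upwards [Filter.eventually_atTop.mpr ⟨1, fun n hn => hn⟩] with n hn
    positivity
  -- |q g| ≤ (M+D) * τg
  have hqg : |q g| ≤ (M + D) * τg := by
    have htend' : Filter.Tendsto
        (fun n : ℕ => (M + D) * ((wordNorm (conjSet S) (g ^ n) : ℝ) / n))
        Filter.atTop (nhds ((M + D) * τg)) := htend.const_mul _
    refine ge_of_tendsto htend' ?_
    filter_upwards [Filter.eventually_atTop.mpr ⟨1, fun n hn => hn⟩] with n hn
    have hnpos : (0:ℝ) < n := by exact_mod_cast hn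
    have hb := hbound (g ^ n)
    have he : q (g ^ n) = (n : ℝ) * q g := by
      have := hhom g (n : ℤ)
      rw [zpow_natCast] at this
      simpa using this
    rw [he, abs_mul, Nat.abs_cast] at hb
    rw [← sub_nonneg]
    have : (M + D) * ((wordNorm (conjSet S) (g ^ n) : ℝ) / n) - |q g|
        = ((wordNorm (conjSet S) (g ^ n) : ℝ) * (M + D) - n * |q g|) / n := by
      field_simp
    rw [this]
    exact div_nonneg (by linarith) hnpos.le
  constructor
  · nlinarith
  · intro hne
    have : 0 < |q g| := abs_pos.mpr hne
    nlinarith
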